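/- For every natural number N ≥ 1 there exist finite relations R1, R2 ⊆ ℕ × ℕ and S ⊆ ℕ × ℕ (namely R1 = R2 = {(1,1)} and S = {(1,1),(2,1),…,(N,1)}) such that the full star join Star = {(x1,x2,y,z) : (x1,z) ∈ R1, (x2,z) ∈ R2, (y,z) ∈ S} satisfies |Star| = N, while |S|^{1/3} · (Σ_{z} |{x1 : (x1,z) ∈ R1}|³)^{1/3} · (Σ_{z} |{x2 : (x2,z) ∈ R2}|³)^{1/3} = N^{1/3}. Consequently, for N > 1 the group-by q-inequality |StarG| ≤ |S|^{1/3} · ‖deg_{R1}(X1|Z)‖_3 · ‖deg_{R2}(X2|Z)‖_3 fails when the left-hand side is replaced by the size of the full join. -/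
import Mathlib


/-- For every `N ≥ 1` there are finite relations `R1, R2, S ⊆ ℕ × ℕ` whose full star
join has exactly `N` tuples, while the quantity
`|S|^{1/3} · ‖deg_{R1}(X1|Z)‖_3 · ‖deg_{R2}(X2|Z)‖_3` equals `N^{1/3}`.
Consequently, for `N > 1` the group-by q-inequality fails when its left-hand side is
replaced by the size of the full join. -/
theorem star_full_join_counterexample (N : ℕ) (hN : 1 ≤ N) :
    ∃ R1 R2 S : Finset (ℕ × ℕ),
      (({t : ℕ × ℕ × ℕ × ℕ |
          (t.1, t.2.2.2) ∈ R1 ∧ (t.2.1, t.2.2.2) ∈ R2 ∧ (t.2.2.1, t.2.2.2) ∈ S} :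
            Set (ℕ × ℕ × ℕ × ℕ)).ncard = N) ∧
      ((S.card : ℝ) ^ ((1 : ℝ) / 3)
          * (∑ z ∈ R1.image Prod.snd, ((R1.filter (fun t => t.2 = z)).card : ℝ) ^ 3)
              ^ ((1 : ℝ) / 3)
          * (∑ z ∈ R2.image Prod.snd, ((R2.filter (fun t => t.2 = z)).card : ℝ) ^ 3)
              ^ ((1 : ℝ) / 3)
        = (N : ℝ) ^ ((1 : ℝ) / 3)) ∧
      (1 < N →
        ¬ ((({t : ℕ × ℕ × ℕ × ℕ |
              (t.1, t.2.2.2) ∈ R1 ∧ (t.2.1, t.2.2.2) ∈ R2 ∧ (t.2.2.1, t.2.2.2) ∈ S} :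
                Set (ℕ × ℕ × ℕ × ℕ)).ncard : ℝ)
            ≤ (S.card : ℝ) ^ ((1 : ℝ) / 3)
              * (∑ z ∈ R1.image Prod.snd,
                  ((R1.filter (fun t => t.2 = z)).card : ℝ) ^ 3) ^ ((1 : ℝ) / 3)
              * (∑ z ∈ R2.image Prod.snd,
                  ((R2.filter (fun t => t.2 = z)).card : ℝ) ^ 3) ^ ((1 : ℝ) / 3))) := by
  refine ⟨{(1,1)}, {(1,1)}, (Finset.range N).image (fun i => (i+1, 1)), ?_, ?_, ?_⟩
  · -- ncard of star set = N
    have hset : ({t : ℕ × ℕ × ℕ × ℕ |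
          (t.1, t.2.2.2) ∈ ({(1,1)} : Finset (ℕ × ℕ)) ∧
          (t.2.1, t.2.2.2) ∈ ({(1,1)} : Finset (ℕ × ℕ)) ∧
          (t.2.2.1, t.2.2.2) ∈ (Finset.range N).image (fun i => (i+1, 1))} :
            Set (ℕ × ℕ × ℕ × ℕ))
        = ↑((Finset.range N).image (fun i => (1, 1, i+1, 1))) := by
      ext ⟨a, b, c, d⟩
      simp only [Set.mem_setOf_eq, Finset.coe_image, Set.mem_image, Finset.mem_singleton,
        Finset.mem_image, Finset.mem_range, Prod.mk.injEq, Finset.coe_range, Set.mem_Iio]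
      constructor
      · rintro ⟨⟨ha, hd⟩, ⟨hb, _⟩, i, hi, hc, _⟩
        exact ⟨i, hi, ha.symm, hb.symm, hc, hd.symm⟩
      · rintro ⟨i, hi, ha, hb, hc, hd⟩
        exact ⟨⟨ha.symm, hd.symm⟩, ⟨hb.symm, hd.symm⟩, i, hi, hc, hd⟩
    rw [hset, Set.ncard_coe_finset, Finset.card_image_of_injective, Finset.card_range]
    intro x y h; simpa using h
  · -- the norm product equals N^(1/3)
    have hScard : ((Finset.range N).image (fun i => (i+1, 1))).card = N := by
      rw [Finset.card_image_of_injective, Finset.card_range]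
      intro x y h; simpa using h
    have h1 : (({(1,1)} : Finset (ℕ × ℕ)).image Prod.snd) = {1} := rfl
    rw [hScard, h1]
    simp [Finset.filter_singleton]
  · -- failure for N > 1
    intro hN1 hle
    have hScard : ((Finset.range N).image (fun i => (i+1, 1))).card = N := by
      rw [Finset.card_image_of_injective, Finset.card_range]
      intro x y h; simpa using h
    have hset : ({t : ℕ × ℕ × ℕ × ℕ |
          (t.1, t.2.2.2) ∈ ({(1,1)} : Finset (ℕ × ℕ)) ∧
          (t.2.1, t.2.2.2) ∈ ({(1,1)} : Finset (ℕ × ℕ)) ∧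
          (t.2.2.1, t.2.2.2) ∈ (Finset.range N).image (fun i => (i+1, 1))} :
            Set (ℕ × ℕ × ℕ × ℕ))
        = ↑((Finset.range N).image (fun i => (1, 1, i+1, 1))) := by
      ext ⟨a, b, c, d⟩
      simp only [Set.mem_setOf_eq, Finset.coe_image, Set.mem_image, Finset.mem_singleton,
        Finset.mem_image, Finset.mem_range, Prod.mk.injEq, Finset.coe_range, Set.mem_Iio]
      constructor
      · rintro ⟨⟨ha, hd⟩, ⟨hb, _⟩, i, hi, hc, _⟩
        exact ⟨i, hi, ha.symm, hb.symm, hc, hd.symm⟩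
      · rintro ⟨i, hi, ha, hb, hc, hd⟩
        exact ⟨⟨ha.symm, hd.symm⟩, ⟨hb.symm, hd.symm⟩, i, hi, hc, hd⟩
    have hncard : ({t : ℕ × ℕ × ℕ × ℕ |
          (t.1, t.2.2.2) ∈ ({(1,1)} : Finset (ℕ × ℕ)) ∧
          (t.2.1, t.2.2.2) ∈ ({(1,1)} : Finset (ℕ × ℕ)) ∧
          (t.2.2.1, t.2.2.2) ∈ (Finset.range N).image (fun i => (i+1, 1))} :
            Set (ℕ × ℕ × ℕ × ℕ)).ncard = N := by
      rw [hset, Set.ncard_coe_finset, Finset.card_image_of_injective, Finset.card_range]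
      intro x y h; simpa using h
    have h1 : (({(1,1)} : Finset (ℕ × ℕ)).image Prod.snd) = {1} := rfl
    rw [hncard, hScard, h1] at hle
    simp only [Finset.filter_singleton] at hle
    have hrhs : ((N : ℝ) : ℝ) ^ ((1:ℝ)/3) * 1 * 1 = (N : ℝ) ^ ((1:ℝ)/3) := by ring
    have hNR : (1 : ℝ) < (N : ℝ) := by exact_mod_cast hN1
    have hlt : (N : ℝ) ^ ((1:ℝ)/3) < (N : ℝ) ^ (1:ℝ) := by
      apply Real.rpow_lt_rpow_of_exponent_lt hNR
      norm_num
    rw [Real.rpow_one] at hlt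
    have : (N : ℝ) ≤ (N : ℝ) ^ ((1:ℝ)/3) := by
      calc (N : ℝ) ≤ _ := hle
        _ = (N : ℝ) ^ ((1:ℝ)/3) := by
          simp [Finset.filter_singleton]
    linarith
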